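/- Let T be a ditree, let S_1, …, S_t be all source sets and sink sets of T that contain no leaf, and let L be the set of all leaves of T. Let M be the subset of V(T) consisting of L together with exactly one (arbitrarily chosen) vertex from each S_i, 1 ≤ i ≤ t. Then M is a minimum geodetic set of T. -/

import Mathlib

namespace GeoPaper

variable {V : Type*}

/-- A directed walk from `u` to `v` in the digraph with arc relation `D`,
represented by the list of its vertices. -/
def IsWalk (D : V → V → Prop) (u v : V) (p : List V) : Prop :=
  p.Chain' D ∧ p.head? = some u ∧ p.getLast? = some v

/-- `interval D u v` is the set of vertices lying on some shortest directed
path from `u` to `v` (i.e. a directed walk of minimum length from `u` to `v`). -/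
def interval (D : V → V → Prop) (u v : V) : Set V :=
  {x | ∃ p, IsWalk D u v p ∧ (∀ q, IsWalk D u v q → p.length ≤ q.length) ∧ x ∈ p}

/-- `S` is a geodetic set of the digraph `D`: every vertex lies on a shortest
directed path between two vertices of `S`. -/
def IsGeodetic (D : V → V → Prop) (S : Set V) : Prop :=
  ∀ x, ∃ u ∈ S, ∃ v ∈ S, x ∈ interval D u v

/-- `S` is a geodetic set of minimum cardinality. -/
def IsMinGeodetic (D : V → V → Prop) (S : Set V) : Prop :=
  IsGeodetic D S ∧ ∀ T : Set V, IsGeodetic D T → S.ncard ≤ T.ncard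

/-- a source: no incoming arcs. -/
def IsSource (D : V → V → Prop) (v : V) : Prop := ∀ u, ¬ D u v

/-- a sink: no outgoing arcs. -/
def IsSink (D : V → V → Prop) (v : V) : Prop := ∀ u, ¬ D v u

/-- an extremal vertex: a source or a sink. -/
def Extremal (D : V → V → Prop) (v : V) : Prop := IsSource D v ∨ IsSink D v

/-- the digraph `D` has no directed 2-cycle (an oriented graph). -/
def NoTwoCycle (D : V → V → Prop) : Prop := ∀ u v, D u v → ¬ D v u

/-- the underlying undirected simple graph of a digraph. -/
def underlying (D : V → V → Prop) : SimpleGraph V where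
  Adj u v := u ≠ v ∧ (D u v ∨ D v u)
  symm := ⟨fun u v h => ⟨h.1.symm, h.2.symm⟩⟩
  loopless := ⟨fun v h => h.1 rfl⟩

/-- a leaf: a vertex of degree 1 in the underlying undirected graph. -/
def IsLeaf (D : V → V → Prop) (v : V) : Prop := ((underlying D).neighborSet v).ncard = 1

/-- a ditree: a digraph whose underlying undirected graph is a tree. -/
def IsDitree (D : V → V → Prop) : Prop := (∀ v, ¬ D v v) ∧ (underlying D).IsTree

/-- reachability by directed paths. -/
def Reach (D : V → V → Prop) : V → V → Prop := Relation.ReflTransGen D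

/-- `S` is a maximal strongly connected component of `D`. -/
def IsSCC (D : V → V → Prop) (S : Set V) : Prop :=
  S.Nonempty ∧ (∀ u ∈ S, ∀ v ∈ S, Reach D u v) ∧
    ∀ T : Set V, S ⊆ T → (∀ u ∈ T, ∀ v ∈ T, Reach D u v) → T ⊆ S

/-- a source set: a maximal strongly connected component no arc enters from outside. -/
def IsSourceSet (D : V → V → Prop) (S : Set V) : Prop :=
  IsSCC D S ∧ ∀ u v, v ∈ S → D u v → u ∈ S

/-- a sink set: a maximal strongly connected component no arc leaves. -/
def IsSinkSet (D : V → V → Prop) (S : Set V) : Prop :=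
  IsSCC D S ∧ ∀ u v, u ∈ S → D u v → v ∈ S

/-- a transitive vertex. -/
def IsTransitiveVertex (D : V → V → Prop) (v : V) : Prop :=
  ∀ u1 u2, D u1 v → D v u2 → D u1 u2 ∨ u1 = u2



variable {T : V → V → Prop}

lemma adj_of_arc (hT : IsDitree T) {a b : V} (h : T a b) : (underlying T).Adj a b :=
  ⟨fun he => hT.1 b (he ▸ h), Or.inl h⟩

/-- A walk of the underlying graph is forward if all its darts are arcs. -/
def Fwd (T : V → V → Prop) {u v : V} (w : (underlying T).Walk u v) : Prop :=
  ∀ d ∈ w.darts, T d.fst d.snd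

lemma fwd_nil {u : V} : Fwd T (SimpleGraph.Walk.nil : (underlying T).Walk u u) := by
  intro d hd; simp [SimpleGraph.Walk.darts] at hd

lemma fwd_cons {u b v : V} (h : (underlying T).Adj u b) (w : (underlying T).Walk b v)
    (ha : T u b) (hw : Fwd T w) : Fwd T (SimpleGraph.Walk.cons h w) := by
  intro d hd
  rcases List.mem_cons.1 hd with h1 | h2
  · subst h1; exact ha
  · exact hw d h2

lemma fwd_of_cons {u b v : V} {h : (underlying T).Adj u b} {w : (underlying T).Walk b v}
    (hw : Fwd T (SimpleGraph.Walk.cons h w)) : T u b ∧ Fwd T w :=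
  ⟨hw _ (List.mem_cons_self), fun d hd => hw d (List.mem_cons_of_mem _ hd)⟩

lemma support_getLast? {u v : V} (w : (underlying T).Walk u v) :
    w.support.getLast? = some v := by
  induction w with
  | nil => rfl
  | cons h p ih =>
    rw [SimpleGraph.Walk.support_cons]
    rw [SimpleGraph.Walk.support_eq_cons p] at ih ⊢
    rw [List.getLast?_cons_cons]
    exact ih

lemma isWalk_support {u v : V} {w : (underlying T).Walk u v} (hf : Fwd T w) :
    IsWalk T u v w.support := by
  refine ⟨?_, ?_, support_getLast? w⟩
  · induction w with
    | nil => exact List.isChain_singleton _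
    | cons h p ih =>
      obtain ⟨ha, hp⟩ := fwd_of_cons hf
      rw [SimpleGraph.Walk.support_cons]
      rw [SimpleGraph.Walk.support_eq_cons p] at ih ⊢
      exact List.IsChain.cons_cons ha (ih hp)
  · rw [SimpleGraph.Walk.support_eq_cons]; rfl

lemma fwd_reach {u v : V} {w : (underlying T).Walk u v} (hf : Fwd T w) : Reach T u v := by
  induction w with
  | nil => exact Relation.ReflTransGen.refl
  | cons h p ih =>
    obtain ⟨ha, hp⟩ := fwd_of_cons hf
    exact Relation.ReflTransGen.head ha (ih hp)

lemma exists_gwalk (hT : IsDitree T) {u v : V} {p : List V} (h : IsWalk T u v p) :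
    ∃ w : (underlying T).Walk u v, w.support = p := by
  obtain ⟨hc, hh, hl⟩ := h
  induction p generalizing u with
  | nil => simp at hh
  | cons a q ih =>
    have hau : a = u := by simpa using hh
    subst hau
    cases q with
    | nil =>
      have : a = v := by simpa using hl
      subst this
      exact ⟨SimpleGraph.Walk.nil, rfl⟩
    | cons b r =>
      have hab : T a b := (List.isChain_cons_cons.1 hc).1
      obtain ⟨w, hw⟩ := ih (u := b) (List.isChain_cons_cons.1 hc).2 rfl
        (by simpa [List.getLast?_cons_cons] using hl)
      exact ⟨SimpleGraph.Walk.cons (adj_of_arc hT hab) w, by simp [hw]⟩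

lemma reach_head_of_mem {p : List V} {u x : V} (hc : p.Chain' T) (hh : p.head? = some u)
    (hx : x ∈ p) : Reach T u x := by
  induction p generalizing u with
  | nil => simp at hh
  | cons a q ih =>
    have hau : a = u := by simpa using hh
    subst hau
    rcases List.mem_cons.1 hx with rfl | hxq
    · exact Relation.ReflTransGen.refl
    · cases q with
      | nil => simp at hxq
      | cons b r =>
        exact Relation.ReflTransGen.head (List.isChain_cons_cons.1 hc).1
          (ih (List.isChain_cons_cons.1 hc).2 rfl hxq)

lemma reach_last_of_mem {p : List V} {v x : V} (hc : p.Chain' T) (hl : p.getLast? = some v)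
    (hx : x ∈ p) : Reach T x v := by
  induction p generalizing x with
  | nil => simp at hx
  | cons a q ih =>
    cases q with
    | nil =>
      have h1 : a = v := by simpa using hl
      have h2 : x = a := by simpa using hx
      rw [h2, h1]; exact Relation.ReflTransGen.refl
    | cons b r =>
      rcases List.mem_cons.1 hx with rfl | hxq
      · exact Relation.ReflTransGen.head (List.isChain_cons_cons.1 hc).1
          (ih (List.isChain_cons_cons.1 hc).2 (by simpa [List.getLast?_cons_cons] using hl) (List.mem_cons_self))
      · exact ih (List.isChain_cons_cons.1 hc).2 (by simpa [List.getLast?_cons_cons] using hl) hxq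


open SimpleGraph

/-- The unique path between two vertices in a ditree. -/
noncomputable def pa (hT : IsDitree T) (u v : V) : (underlying T).Walk u v :=
  (hT.2.existsUnique_path u v).exists.choose

lemma pa_isPath (hT : IsDitree T) (u v : V) : (pa hT u v).IsPath :=
  (hT.2.existsUnique_path u v).exists.choose_spec

lemma pa_unique (hT : IsDitree T) {u v : V} {w : (underlying T).Walk u v} (hw : w.IsPath) :
    w = pa hT u v :=
  (hT.2.existsUnique_path u v).unique hw (pa_isPath hT u v)

lemma pa_length (hT : IsDitree T) (u v : V) : (pa hT u v).length = (underlying T).dist u v := by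
  obtain ⟨p, hp, hlen⟩ := ((hT.2.isConnected u v)).exists_path_of_dist
  rw [pa_unique hT hp] at hlen
  exact hlen

lemma pa_self (hT : IsDitree T) (u : V) : pa hT u u = Walk.nil := by
  symm; exact pa_unique hT (by simp)

/-- In a ditree, reachability implies the tree path is forward. -/
lemma fwd_pa (hT : IsDitree T) {u v : V} (h : Reach T u v) : Fwd T (pa hT u v) := by
  classical
  induction h using Relation.ReflTransGen.head_induction_on with
  | refl => rw [pa_self hT]; exact fwd_nil
  | head hab hbc ih =>
    rename_i a b
    by_cases hmem : a ∈ (pa hT b v).support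
    · have hdrop : ((pa hT b v).dropUntil a hmem) = pa hT a v :=
        pa_unique hT ((pa_isPath hT b v).dropUntil hmem)
      rw [← hdrop]
      intro d hd
      exact ih d (Walk.darts_dropUntil_subset _ hmem hd)
    · have hpath : (Walk.cons (adj_of_arc hT hab) (pa hT b v)).IsPath :=
        (Walk.cons_isPath_iff _ _).2 ⟨pa_isPath hT b v, hmem⟩
      rw [← pa_unique hT hpath]
      exact fwd_cons _ _ hab ih

lemma length_le_of_isWalk (hT : IsDitree T) {u v : V} {p : List V} (h : IsWalk T u v p) :
    (underlying T).dist u v + 1 ≤ p.length := by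
  obtain ⟨w, hw⟩ := exists_gwalk hT h
  have h1 := SimpleGraph.dist_le w
  have hlen : w.support.length = w.length + 1 := Walk.length_support w
  rw [hw] at hlen
  omega

lemma mem_interval_of_reach (hT : IsDitree T) {u v x : V} (h : Reach T u v)
    (hx : x ∈ (pa hT u v).support) : x ∈ interval T u v := by
  refine ⟨(pa hT u v).support, isWalk_support (fwd_pa hT h), ?_, hx⟩
  intro q hq
  have h1 := length_le_of_isWalk hT hq
  rw [Walk.length_support, pa_length]
  omega

lemma reach_of_isWalk {u v : V} {p : List V} (h : IsWalk T u v p) : Reach T u v := by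
  have hv : v ∈ p := by
    obtain ⟨hne, heq⟩ := List.mem_getLast?_eq_getLast (l := p) (x := v) h.2.2
    exact heq ▸ List.getLast_mem hne
  exact reach_head_of_mem h.1 h.2.1 hv

lemma reach_of_mem_interval {u v x : V} (h : x ∈ interval T u v) :
    Reach T u x ∧ Reach T x v := by
  obtain ⟨p, hw, _, hx⟩ := h
  exact ⟨reach_head_of_mem hw.1 hw.2.1 hx, reach_last_of_mem hw.1 hw.2.2 hx⟩

lemma mem_pa_of_mem_interval (hT : IsDitree T) {u v x : V} (h : x ∈ interval T u v) :
    x ∈ (pa hT u v).support := by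
  obtain ⟨p, hw, hmin, hx⟩ := h
  have hr : Reach T u v := reach_of_isWalk hw
  have hle : p.length ≤ (underlying T).dist u v + 1 := by
    have := hmin _ (isWalk_support (fwd_pa hT hr))
    rwa [Walk.length_support, pa_length] at this
  obtain ⟨w, hwsup⟩ := exists_gwalk hT hw
  have hlen : w.length = (underlying T).dist u v := by
    have h1 := SimpleGraph.dist_le w
    have h2 : w.support.length = w.length + 1 := Walk.length_support w
    rw [hwsup] at h2
    omega
  have hP : w.IsPath := w.isPath_of_length_eq_dist hlen
  rw [← pa_unique hT hP, hwsup]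
  exact hx


/-- the vertex adjacent to `x` in the direction of `u` (for `u ≠ x`). -/
noncomputable def br (hT : IsDitree T) (x u : V) : V := (pa hT x u).getVert 1

lemma pa_length_pos (hT : IsDitree T) {x u : V} (h : u ≠ x) : 0 < (pa hT x u).length := by
  rcases Nat.eq_zero_or_pos (pa hT x u).length with h0 | h0
  · exact absurd (Walk.eq_of_length_eq_zero h0).symm h
  · exact h0

lemma br_adj (hT : IsDitree T) {x u : V} (h : u ≠ x) : (underlying T).Adj x (br hT x u) := by
  have := (pa hT x u).adj_getVert_succ (i := 0) (pa_length_pos hT h)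
  simpa [br, Walk.getVert_zero] using this

lemma br_mem_support (hT : IsDitree T) {x u : V} (h : u ≠ x) :
    br hT x u ∈ (pa hT x u).support := by
  rw [Walk.mem_support_iff_exists_getVert]
  exact ⟨1, rfl, pa_length_pos hT h⟩

lemma getVert_one_append {G : SimpleGraph V} {a b c : V} (p : G.Walk a b) (q : G.Walk b c)
    (hp : 0 < p.length) : (p.append q).getVert 1 = p.getVert 1 := by
  rw [Walk.getVert_append]
  rcases lt_or_eq_of_le (Nat.one_le_iff_ne_zero.2 (Nat.pos_iff_ne_zero.1 hp)) with h | h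
  · rw [if_pos h]
  · rw [if_neg (by omega)]
    have h1 : (1 : ℕ) - p.length = 0 := by omega
    rw [h1, Walk.getVert_zero]
    have h2 : p.getVert 1 = b := by rw [h]; exact Walk.getVert_length p
    rw [h2]

/-- branch of an intermediate vertex on the tree path. -/
lemma br_eq_of_mem (hT : IsDitree T) {x u t : V} (htu : t ∈ (pa hT x u).support) (ht : t ≠ x) :
    br hT x t = br hT x u := by
  classical
  have hsplit := (pa hT x u).take_spec htu
  have htake : (pa hT x u).takeUntil t htu = pa hT x t :=
    pa_unique hT ((pa_isPath hT x u).takeUntil htu)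
  have hpos : 0 < ((pa hT x u).takeUntil t htu).length := by
    rw [htake]; exact pa_length_pos hT ht
  unfold br
  rw [← hsplit, getVert_one_append _ _ hpos, htake]

lemma pa_of_adj (hT : IsDitree T) {x y : V} (h : (underlying T).Adj x y) :
    pa hT x y = Walk.cons h Walk.nil := by
  symm; exact pa_unique hT (by simp [h.ne])

lemma br_of_adj (hT : IsDitree T) {x y : V} (h : (underlying T).Adj x y) : br hT x y = y := by
  unfold br; rw [pa_of_adj hT h]; rfl

lemma br_eq_of_adj (hT : IsDitree T) {x a c : V} (h : (underlying T).Adj a c)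
    (ha : a ≠ x) (hc : c ≠ x) : br hT x a = br hT x c := by
  classical
  by_cases hmem : c ∈ (pa hT x a).support
  · exact (br_eq_of_mem hT hmem hc).symm
  · have hpath : ((pa hT x a).append (Walk.cons h Walk.nil)).IsPath := by
      have : (Walk.cons h.symm (pa hT x a).reverse).IsPath :=
        (Walk.cons_isPath_iff _ _).2 ⟨(pa_isPath hT x a).reverse, by
          rwa [Walk.support_reverse, List.mem_reverse]⟩
      have hrev := this.reverse
      rwa [Walk.reverse_cons, Walk.reverse_reverse] at hrev
    have : pa hT x c = (pa hT x a).append (Walk.cons h Walk.nil) := (pa_unique hT hpath).symm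
    unfold br
    rw [this, getVert_one_append _ _ (pa_length_pos hT ha)]

lemma br_eq_of_walk_avoid (hT : IsDitree T) {x a c : V} (w : (underlying T).Walk a c)
    (hx : x ∉ w.support) (ha : a ≠ x) (hc : c ≠ x) : br hT x a = br hT x c := by
  induction w with
  | nil => rfl
  | cons h p ih =>
    rename_i d e f
    have hex : e ≠ x := fun hh => hx (by rw [Walk.support_cons]; right; exact hh ▸ p.start_mem_support)
    exact (br_eq_of_adj hT h ha hex).trans
      (ih (fun hh => hx (by rw [Walk.support_cons]; exact List.mem_cons_of_mem _ hh)) hex hc)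

lemma mem_pa_of_br_ne (hT : IsDitree T) {x a c : V} (ha : a ≠ x) (hc : c ≠ x)
    (h : br hT x a ≠ br hT x c) : x ∈ (pa hT a c).support := by
  by_contra hx
  exact h (br_eq_of_walk_avoid hT (pa hT a c) hx ha hc)

lemma reach_split (hT : IsDitree T) {a c x : V} (h : Reach T a c)
    (hx : x ∈ (pa hT a c).support) : Reach T a x ∧ Reach T x c := by
  have hf := fwd_pa hT h
  have hw := isWalk_support hf
  exact ⟨reach_head_of_mem hw.1 hw.2.1 hx, reach_last_of_mem hw.1 hw.2.2 hx⟩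

lemma arc_of_reach_adj (hT : IsDitree T) {y x : V} (hadj : (underlying T).Adj y x)
    (h : Reach T y x) : T y x := by
  have hf := fwd_pa hT h
  rw [pa_of_adj hT hadj] at hf
  exact hf ⟨(y, x), hadj⟩ (by simp [Walk.darts_cons])

lemma pa_reverse (hT : IsDitree T) (a c : V) : pa hT c a = (pa hT a c).reverse :=
  (pa_unique hT (pa_isPath hT a c).reverse).symm

lemma cover_interval (hT : IsDitree T) {u v x : V} (hux : Reach T u x) (hxv : Reach T x v)
    (hu : u ≠ x) (hv : v ≠ x) (hbr : br hT x u ≠ br hT x v) : x ∈ interval T u v := by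
  exact mem_interval_of_reach hT (hux.trans hxv) (mem_pa_of_br_ne hT hu hv hbr)



lemma exists_reach_M [Fintype V] (M : Set V)
    (hleaves : ∀ v, IsLeaf T v → v ∈ M)
    (hone : ∀ S : Set V, (IsSourceSet T S ∨ IsSinkSet T S) →
      (∀ w ∈ S, ¬ IsLeaf T w) → ∃! v, v ∈ M ∩ S) (z : V) :
    ∃ m ∈ M, Reach T z m := by
  classical
  set f : V → ℕ := fun a => (Finset.univ.filter fun b => Reach T a b).card with hf
  obtain ⟨w, hw, hmin⟩ := Finset.exists_min_image
    (Finset.univ.filter fun b => Reach T z b) f ⟨z, Finset.mem_filter.2 ⟨Finset.mem_univ z, Relation.ReflTransGen.refl⟩⟩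
  simp only [Finset.mem_filter, Finset.mem_univ, true_and] at hw hmin
  have hmax : ∀ b, Reach T w b → Reach T b w := by
    intro b hb
    by_contra hnb
    have hsub : (Finset.univ.filter fun c => Reach T b c) ⊂
        (Finset.univ.filter fun c => Reach T w c) := by
      rw [Finset.ssubset_def]
      constructor
      · intro c hc
        simp only [Finset.mem_filter, Finset.mem_univ, true_and] at hc ⊢
        exact hb.trans hc
      · intro hsup
        have hwmem : w ∈ Finset.univ.filter fun c => Reach T w c :=
          Finset.mem_filter.2 ⟨Finset.mem_univ w, Relation.ReflTransGen.refl⟩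
        have := hsup hwmem
        simp only [Finset.mem_filter, Finset.mem_univ, true_and] at this
        exact hnb this
    have hlt : f b < f w := Finset.card_lt_card hsub
    have := hmin b (hw.trans hb)
    omega
  set C : Set V := {a | Reach T w a ∧ Reach T a w} with hC
  have hwC : w ∈ C := ⟨Relation.ReflTransGen.refl, Relation.ReflTransGen.refl⟩
  have hscc : IsSCC T C := by
    refine ⟨⟨w, hwC⟩, fun u hu v hv => hu.2.trans hv.1, fun S hsub hmut t ht => ?_⟩
    exact ⟨hmut w (hsub hwC) t ht, hmut t ht w (hsub hwC)⟩
  have hsink : IsSinkSet T C := by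
    refine ⟨hscc, fun u v hu huv => ?_⟩
    have h1 : Reach T w v := hu.1.trans (Relation.ReflTransGen.single huv)
    exact ⟨h1, hmax v h1⟩
  by_cases hleaf : ∃ l ∈ C, IsLeaf T l
  · obtain ⟨l, hl, hlf⟩ := hleaf
    exact ⟨l, hleaves l hlf, hw.trans hl.1⟩
  · obtain ⟨m, hm, _⟩ := hone C (Or.inr hsink) (fun a ha hlf => hleaf ⟨a, ha, hlf⟩)
    exact ⟨m, hm.1, hw.trans hm.2.1⟩

section Swap

lemma underlying_swap : underlying (Function.swap T) = underlying T := by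
  refine SimpleGraph.ext ?_
  ext u v
  exact and_congr_right fun _ => or_comm

lemma reach_swap {a b : V} : Reach (Function.swap T) a b ↔ Reach T b a :=
  Relation.reflTransGen_swap

lemma isLeaf_swap {v : V} : IsLeaf (Function.swap T) v ↔ IsLeaf T v := by
  unfold IsLeaf; rw [underlying_swap]

lemma isDitree_swap (hT : IsDitree T) : IsDitree (Function.swap T) := by
  refine ⟨fun v h => hT.1 v h, ?_⟩
  rw [underlying_swap]; exact hT.2

lemma isSCC_swap {S : Set V} : IsSCC (Function.swap T) S ↔ IsSCC T S := by
  unfold IsSCC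
  refine and_congr_right fun _ => ?_
  constructor
  · rintro ⟨h1, h2⟩
    exact ⟨fun u hu v hv => reach_swap.1 (h1 v hv u hu),
      fun S' hs hm => h2 S' hs fun u hu v hv => reach_swap.2 (hm v hv u hu)⟩
  · rintro ⟨h1, h2⟩
    exact ⟨fun u hu v hv => reach_swap.2 (h1 v hv u hu),
      fun S' hs hm => h2 S' hs fun u hu v hv => reach_swap.1 (hm v hv u hu)⟩

lemma isSourceSet_swap {S : Set V} : IsSourceSet (Function.swap T) S ↔ IsSinkSet T S := by
  unfold IsSourceSet IsSinkSet
  rw [isSCC_swap]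
  exact and_congr_right fun _ => ⟨fun h u v hu huv => h v u hu huv, fun h u v hv huv => h v u hv huv⟩

lemma isSinkSet_swap {S : Set V} : IsSinkSet (Function.swap T) S ↔ IsSourceSet T S := by
  unfold IsSourceSet IsSinkSet
  rw [isSCC_swap]
  exact and_congr_right fun _ => ⟨fun h u v hu huv => h v u hu huv, fun h u v hv huv => h v u hv huv⟩

lemma exists_reach_to_M [Fintype V] (M : Set V)
    (hleaves : ∀ v, IsLeaf T v → v ∈ M)
    (hone : ∀ S : Set V, (IsSourceSet T S ∨ IsSinkSet T S) →
      (∀ w ∈ S, ¬ IsLeaf T w) → ∃! v, v ∈ M ∩ S) (z : V) :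
    ∃ m ∈ M, Reach T m z := by
  have h := exists_reach_M (T := Function.swap T) M
    (fun v hv => hleaves v (isLeaf_swap.1 hv))
    (fun S hS hl => hone S (hS.elim (fun h => Or.inr (isSourceSet_swap.1 h))
      (fun h => Or.inl (isSinkSet_swap.1 h)))
      (fun a ha hlf => hl a ha (isLeaf_swap.2 hlf))) z
  obtain ⟨m, hm, hr⟩ := h
  exact ⟨m, hm, reach_swap.1 hr⟩

end Swap


lemma leaf_eq_endpoints {u v l : V} {w : (underlying T).Walk u v} (hw : w.IsPath)
    (hl : IsLeaf T l) (hm : l ∈ w.support) : l = u ∨ l = v := by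
  induction w with
  | nil => left; simpa using hm
  | cons h p ih =>
    rename_i a b c
    rw [Walk.support_cons, List.mem_cons] at hm
    rcases hm with rfl | hm2
    · left; rfl
    · rcases ih (Walk.IsPath.of_cons hw) hm2 with hb | hv
      · subst hb
        cases p with
        | nil => right; rfl
        | cons h2 q =>
          rename_i d
          exfalso
          obtain ⟨n, hn⟩ := Set.ncard_eq_one.1 hl
          have ha : a ∈ (underlying T).neighborSet l := h.symm
          have hd : d ∈ (underlying T).neighborSet l := h2
          have hpa : a ∉ (Walk.cons h2 q).support := ((Walk.cons_isPath_iff _ _).1 hw).2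
          have hdm : d ∈ (Walk.cons h2 q).support := by
            rw [Walk.support_cons]
            exact List.mem_cons_of_mem _ q.start_mem_support
          have : a ≠ d := fun he => hpa (he ▸ hdm)
          rw [hn] at ha hd
          exact this (ha.trans hd.symm)
      · right; exact hv

lemma mem_sourceSet_of_reach {C : Set V} (hC : IsSourceSet T C) {u c : V} (hc : c ∈ C)
    (h : Reach T u c) : u ∈ C := by
  induction h using Relation.ReflTransGen.head_induction_on with
  | refl => exact hc
  | head hab _ ih => exact hC.2 _ _ ih hab

lemma mem_sinkSet_of_reach {C : Set V} (hC : IsSinkSet T C) {c v : V} (hc : c ∈ C)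
    (h : Reach T c v) : v ∈ C := by
  induction h with
  | refl => exact hc
  | tail _ hbc ih => exact hC.2 _ _ ih hbc

lemma scc_eq_of_inter {C1 C2 : Set V} (h1 : IsSCC T C1) (h2 : IsSCC T C2) {w : V}
    (hw1 : w ∈ C1) (hw2 : w ∈ C2) : C1 = C2 := by
  have hmut : ∀ u ∈ C1 ∪ C2, ∀ v ∈ C1 ∪ C2, Reach T u v := by
    intro u hu v hv
    have hu' : Reach T u w := hu.elim (fun h => h1.2.1 u h w hw1) (fun h => h2.2.1 u h w hw2)
    have hv' : Reach T w v := hv.elim (fun h => h1.2.1 w hw1 v h) (fun h => h2.2.1 w hw2 v h)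
    exact hu'.trans hv'
  have e1 := h1.2.2 _ Set.subset_union_left hmut
  have e2 := h2.2.2 _ Set.subset_union_right hmut
  exact Set.Subset.antisymm (Set.subset_union_left.trans e2) (Set.subset_union_right.trans e1)

lemma exists_other_neighbor [Fintype V] {x b : V} (hnl : ¬ IsLeaf T x)
    (hb : (underlying T).Adj x b) : ∃ y, (underlying T).Adj x y ∧ y ≠ b := by
  have hfin : ((underlying T).neighborSet x).Finite := Set.toFinite _
  have h0 : 0 < ((underlying T).neighborSet x).ncard := (Set.ncard_pos hfin).2 ⟨b, hb⟩
  have h1 : 1 < ((underlying T).neighborSet x).ncard := by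
    have hne1 : ((underlying T).neighborSet x).ncard ≠ 1 := hnl
    omega
  obtain ⟨y, hy, hyb⟩ := Set.exists_ne_of_one_lt_ncard h1 b
  exact ⟨y, hy, hyb⟩

lemma self_mem_interval (x : V) : x ∈ interval T x x := by
  refine ⟨[x], ⟨List.isChain_singleton x, rfl, rfl⟩, ?_, List.mem_singleton_self x⟩
  intro q hq
  cases q with
  | nil => simp [IsWalk] at hq
  | cons a t => simp


lemma getVert_one_cons {G : SimpleGraph V} {a b c : V} (h : G.Adj a b) (p : G.Walk b c) :
    (Walk.cons h p).getVert 1 = b := by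
  show p.getVert 0 = b
  exact Walk.getVert_zero p

lemma branch_extend (hT : IsDitree T) {x z w : V} (hzx : z ≠ x)
    (hzw : (underlying T).Adj z w) (hbw : w ≠ br hT z x) :
    w ≠ x ∧ (underlying T).dist x z < (underlying T).dist x w := by
  classical
  have hwx : w ≠ x := by
    intro h
    subst h
    exact hbw (br_of_adj hT hzw).symm
  have hmem : z ∈ (pa hT x w).support := by
    by_contra hz
    have hpath : ((pa hT x w).append (Walk.cons hzw.symm Walk.nil)).IsPath := by
      have h1 : (Walk.cons hzw (pa hT x w).reverse).IsPath :=
        (Walk.cons_isPath_iff _ _).2 ⟨(pa_isPath hT x w).reverse, by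
          rwa [Walk.support_reverse, List.mem_reverse]⟩
      have h2 := h1.reverse
      rwa [Walk.reverse_cons, Walk.reverse_reverse] at h2
    have hq : pa hT x z = (pa hT x w).append (Walk.cons hzw.symm Walk.nil) :=
      (pa_unique hT hpath).symm
    have hrev : pa hT z x = Walk.cons hzw ((pa hT x w).reverse) := by
      rw [pa_reverse hT x z, hq, Walk.reverse_append, Walk.reverse_cons]
      simp
    have : br hT z x = w := by
      unfold br
      rw [hrev, getVert_one_cons]
    exact hbw this.symm
  constructor
  · exact hwx
  · have hsplit := (pa hT x w).take_spec hmem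
    have hlen := congrArg Walk.length hsplit
    rw [Walk.length_append] at hlen
    have htake : (pa hT x w).takeUntil z hmem = pa hT x z :=
      pa_unique hT ((pa_isPath hT x w).takeUntil hmem)
    have h1 : ((pa hT x w).takeUntil z hmem).length = (underlying T).dist x z := by
      rw [htake, pa_length]
    have h2 : 0 < ((pa hT x w).dropUntil z hmem).length := by
      rcases Nat.eq_zero_or_pos ((pa hT x w).dropUntil z hmem).length with h0 | h0
      · exact absurd (Walk.eq_of_length_eq_zero h0) hzw.ne
      · exact h0
    have h3 := pa_length hT x w
    omega




/-- Let `T` be a ditree, let `S_1, …, S_t` be all source sets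
and sink sets of `T` containing no leaf, and let `L` be the set of leaves of
`T`. Any set `M` consisting of `L` together with exactly one vertex from each
`S_i` is a minimum geodetic set of `T`. -/
theorem leaves_plus_one_per_extremal_scc_isMinGeodetic [Fintype V]
    (T : V → V → Prop) (hT : IsDitree T) (M : Set V)
    (hleaves : ∀ v, IsLeaf T v → v ∈ M)
    (honly : ∀ v ∈ M, IsLeaf T v ∨ ∃ S : Set V,
      (IsSourceSet T S ∨ IsSinkSet T S) ∧ (∀ w ∈ S, ¬ IsLeaf T w) ∧ v ∈ S)
    (hone : ∀ S : Set V, (IsSourceSet T S ∨ IsSinkSet T S) →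
      (∀ w ∈ S, ¬ IsLeaf T w) → ∃! v, v ∈ M ∩ S) :
    IsMinGeodetic T M := by
  classical
  have LR : ∀ z, ∃ m ∈ M, Reach T z m := exists_reach_M M hleaves hone
  have LR' : ∀ z, ∃ m ∈ M, Reach T m z := exists_reach_to_M M hleaves hone
  constructor
  · -- geodetic
    intro x
    by_cases hxM : x ∈ M
    · exact ⟨x, hxM, x, hxM, self_mem_interval x⟩
    have hnl : ¬ IsLeaf T x := fun h => hxM (hleaves x h)
    by_cases hbi : ∀ y, (underlying T).Adj x y → T x y ∧ T y x
    · -- Case A : all incident edges bidirected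
      obtain ⟨m, hmM, hxm⟩ := LR x
      obtain ⟨m', hm'M, hm'x⟩ := LR' x
      have hmx : m ≠ x := fun h => hxM (h ▸ hmM)
      have hm'xne : m' ≠ x := fun h => hxM (h ▸ hm'M)
      by_cases hbrne : br hT x m' ≠ br hT x m
      · exact ⟨m', hm'M, m, hmM, cover_interval hT hm'x hxm hm'xne hmx hbrne⟩
      push_neg at hbrne
      set b := br hT x m with hb
      have hbadj : (underlying T).Adj x b := br_adj hT hmx
      obtain ⟨y', hy'adj, hy'b⟩ := exists_other_neighbor hnl hbadj
      obtain ⟨hxy', hy'x⟩ := hbi y' hy'adj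
      set Z : Finset V := Finset.univ.filter
        (fun z => z ≠ x ∧ br hT x z = y' ∧ Reach T x z ∧ Reach T z x) with hZ
      have hy'Z : y' ∈ Z := by
        rw [hZ]
        simp only [Finset.mem_filter, Finset.mem_univ, true_and]
        exact ⟨hy'adj.ne', br_of_adj hT hy'adj, Relation.ReflTransGen.single hxy',
          Relation.ReflTransGen.single hy'x⟩
      obtain ⟨z, hzZ, hzmax⟩ := Finset.exists_max_image Z
        (fun z => (underlying T).dist x z) ⟨y', hy'Z⟩
      rw [hZ] at hzZ
      simp only [Finset.mem_filter, Finset.mem_univ, true_and] at hzZ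
      obtain ⟨hzx, hzbr, hxz, hzxr⟩ := hzZ
      by_cases hzM : z ∈ M
      · refine ⟨m', hm'M, z, hzM, cover_interval hT hm'x hxz hm'xne hzx ?_⟩
        rw [← hbrne, hzbr] at *
        rw [hbrne, hzbr]
        exact fun h => hy'b (h.symm)
      · have hznl : ¬ IsLeaf T z := fun h => hzM (hleaves z h)
        have hbzadj : (underlying T).Adj z (br hT z x) := br_adj hT (Ne.symm hzx)
        obtain ⟨w, hwadj, hwbr⟩ := exists_other_neighbor hznl hbzadj
        obtain ⟨hwx, hdist⟩ := branch_extend hT hzx hwadj hwbr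
        have hbrxw : br hT x w = y' := by
          rw [← hzbr]
          exact (br_eq_of_adj hT hwadj hzx hwx).symm
        have hwZC : ¬ (Reach T x w ∧ Reach T w x) := by
          rintro ⟨h1, h2⟩
          have hwZ : w ∈ Z := by
            rw [hZ]
            simp only [Finset.mem_filter, Finset.mem_univ, true_and]
            exact ⟨hwx, hbrxw, h1, h2⟩
          have := hzmax w hwZ
          omega
        rcases hwadj.2 with hzw | hwz
        · -- arc z → w
          have hxw : Reach T x w := hxz.trans (Relation.ReflTransGen.single hzw)
          have hnwx : ¬ Reach T w x := fun h => hwZC ⟨hxw, h⟩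
          obtain ⟨m3, hm3M, hwm3⟩ := LR w
          have hm3x : m3 ≠ x := fun h => hnwx (h ▸ hwm3)
          have hbrm3 : br hT x m3 = y' := by
            by_contra hne
            have hxmem : x ∈ (pa hT w m3).support :=
              mem_pa_of_br_ne hT hwx hm3x (by rw [hbrxw]; exact fun h => hne h.symm)
            exact hnwx (reach_split hT hwm3 hxmem).1
          refine ⟨m', hm'M, m3, hm3M,
            cover_interval hT hm'x (hxw.trans hwm3) hm'xne hm3x ?_⟩
          rw [hbrne, hbrm3]
          exact fun h => hy'b h.symm
        · -- arc w → z
          have hwxr : Reach T w x := (Relation.ReflTransGen.single hwz).trans hzxr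
          have hnxw : ¬ Reach T x w := fun h => hwZC ⟨h, hwxr⟩
          obtain ⟨m4, hm4M, hm4w⟩ := LR' w
          have hm4x : m4 ≠ x := fun h => hnxw (h ▸ hm4w)
          have hbrm4 : br hT x m4 = y' := by
            by_contra hne
            have hxmem : x ∈ (pa hT m4 w).support :=
              mem_pa_of_br_ne hT hm4x hwx (fun h => hne (h.trans hbrxw))
            exact hnxw (reach_split hT hm4w hxmem).2
          refine ⟨m4, hm4M, m, hmM,
            cover_interval hT (hm4w.trans hwxr) hxm hm4x hmx ?_⟩
          rw [hbrm4, ← hb]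
          exact hy'b
    · -- Case B : some incident edge is one-directional
      push_neg at hbi
      obtain ⟨y, hyadj, hyor⟩ := hbi
      rcases hyadj.2 with hxy | hyx
      · have hnyx : ¬ T y x := hyor hxy
        obtain ⟨m1, hm1M, hym1⟩ := LR y
        have hm1x : m1 ≠ x := by
          intro h
          subst h
          exact hnyx (arc_of_reach_adj hT hyadj.symm hym1)
        have hbr1 : br hT x m1 = y := by
          by_contra hne
          have hxmem : x ∈ (pa hT y m1).support :=
            mem_pa_of_br_ne hT hyadj.ne' hm1x
              (by rw [br_of_adj hT hyadj]; exact fun h => hne h.symm)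
          exact hnyx (arc_of_reach_adj hT hyadj.symm (reach_split hT hym1 hxmem).1)
        obtain ⟨m2, hm2M, hm2x⟩ := LR' x
        have hm2xne : m2 ≠ x := fun h => hxM (h ▸ hm2M)
        have hbr2 : br hT x m2 ≠ y := by
          intro heq
          have hymem : y ∈ (pa hT x m2).support := heq ▸ br_mem_support hT hm2xne
          have hymem' : y ∈ (pa hT m2 x).support := by
            rw [pa_reverse hT x m2, Walk.support_reverse, List.mem_reverse]
            exact hymem
          exact hnyx (arc_of_reach_adj hT hyadj.symm (reach_split hT hm2x hymem').2)
        refine ⟨m2, hm2M, m1, hm1M,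
          cover_interval hT hm2x ((Relation.ReflTransGen.single hxy).trans hym1)
            hm2xne hm1x ?_⟩
        rw [hbr1]
        exact hbr2
      · have hnxy : ¬ T x y := fun h => hyor h hyx
        obtain ⟨m1, hm1M, hxm1⟩ := LR x
        have hm1x : m1 ≠ x := fun h => hxM (h ▸ hm1M)
        have hbr1 : br hT x m1 ≠ y := by
          intro heq
          have hymem : y ∈ (pa hT x m1).support := heq ▸ br_mem_support hT hm1x
          exact hnxy (arc_of_reach_adj hT hyadj (reach_split hT hxm1 hymem).1)
        obtain ⟨m2, hm2M, hm2y⟩ := LR' y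
        have hm2x : m2 ≠ x := by
          intro h
          subst h
          exact hnxy (arc_of_reach_adj hT hyadj hm2y)
        have hbr2 : br hT x m2 = y := by
          by_contra hne
          have hxmem : x ∈ (pa hT m2 y).support :=
            mem_pa_of_br_ne hT hm2x hyadj.ne'
              (by rw [br_of_adj hT hyadj]; exact hne)
          exact hnxy (arc_of_reach_adj hT hyadj (reach_split hT hm2y hxmem).2)
        refine ⟨m2, hm2M, m1, hm1M,
          cover_interval hT (hm2y.trans (Relation.ReflTransGen.single hyx)) hxm1
            hm2x hm1x ?_⟩
        rw [hbr2]
        exact fun h => hbr1 h.symm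
  · -- minimality
    intro S hS
    have hSCCS : ∀ C : Set V, (IsSourceSet T C ∨ IsSinkSet T C) → ∃ s, s ∈ S ∧ s ∈ C := by
      intro C hC
      have hscc : IsSCC T C := hC.elim (·.1) (·.1)
      obtain ⟨c, hc⟩ := hscc.1
      obtain ⟨u, huS, v, hvS, hint⟩ := hS c
      obtain ⟨huc, hcv⟩ := reach_of_mem_interval hint
      rcases hC with hsrc | hsink
      · exact ⟨u, huS, mem_sourceSet_of_reach hsrc hc huc⟩
      · exact ⟨v, hvS, mem_sinkSet_of_reach hsink hc hcv⟩
    have hleafS : ∀ l, IsLeaf T l → l ∈ S := by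
      intro l hl
      obtain ⟨u, huS, v, hvS, hint⟩ := hS l
      have hmem := mem_pa_of_mem_interval hT hint
      rcases leaf_eq_endpoints (pa_isPath hT u v) hl hmem with rfl | rfl
      · exact huS
      · exact hvS
    have key : ∀ m, ∃ s, m ∈ M → s ∈ S ∧ ((IsLeaf T m ∧ s = m) ∨
        ∃ C : Set V, (IsSourceSet T C ∨ IsSinkSet T C) ∧ (∀ w ∈ C, ¬ IsLeaf T w) ∧
          m ∈ C ∧ s ∈ C) := by
      intro m
      by_cases hmM : m ∈ M
      · by_cases hml : IsLeaf T m
        · exact ⟨m, fun _ => ⟨hleafS m hml, Or.inl ⟨hml, rfl⟩⟩⟩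
        · obtain ⟨C, hC, hCl, hmC⟩ := (honly m hmM).resolve_left hml
          obtain ⟨s, hsS, hsC⟩ := hSCCS C hC
          exact ⟨s, fun _ => ⟨hsS, Or.inr ⟨C, hC, hCl, hmC, hsC⟩⟩⟩
      · exact ⟨m, fun h => absurd h hmM⟩
    choose f hf using key
    apply Set.ncard_le_ncard_of_injOn f (fun m hm => (hf m hm).1) ?_ (Set.toFinite S)
    intro m1 h1 m2 h2 heq
    rcases (hf m1 h1).2 with ⟨hl1, he1⟩ | ⟨C1, hC1, hCl1, hm1C, hs1C⟩ <;>
      rcases (hf m2 h2).2 with ⟨hl2, he2⟩ | ⟨C2, hC2, hCl2, hm2C, hs2C⟩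
    · rw [← he1, ← he2]; exact heq
    · exfalso
      apply hCl2 (f m2) hs2C
      rw [← heq, he1]
      exact hl1
    · exfalso
      apply hCl1 (f m1) hs1C
      rw [heq, he2]
      exact hl2
    · have hin2 : f m1 ∈ C2 := by rw [heq]; exact hs2C
      have hCeq : C1 = C2 :=
        scc_eq_of_inter (hC1.elim (·.1) (·.1)) (hC2.elim (·.1) (·.1)) hs1C hin2
      obtain ⟨mu, _, huniq⟩ := hone C1 hC1 hCl1
      have e1 : m1 = mu := huniq m1 ⟨h1, hm1C⟩
      have e2 : m2 = mu := huniq m2 ⟨h2, by rw [hCeq]; exact hm2C⟩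
      rw [e1, e2]


end GeoPaper
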